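/- Let V₁,…,V_n ⊆ ℝ^ℓ be k-bounded subspaces with an (α,δ)-system S = (S₁,…,S_w) such that for every set Sⱼ and every pair {i₁,i₂} ⊆ Sⱼ, the spaces V_{i₁} and V_{i₂} are τ-separated. Then dim(V₁ + ⋯ + V_n) ≤ αk/(τδ). -/

import Mathlib

open Finset RealInnerProductSpace

def TauSeparated {ℓ : ℕ} (τ : ℝ) (V V' : Submodule ℝ (EuclideanSpace ℝ (Fin ℓ))) : Prop :=
  ∀ v ∈ V, ∀ v' ∈ V', ‖v‖ = 1 → ‖v'‖ = 1 → |⟪v, v'⟫| ≤ 1 - τ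

/-- `S` is an `(α,δ)`-system of the list of spaces `V`. -/
def IsADSystem {ℓ n w : ℕ} (α : ℕ) (δ : ℝ)
    (V : Fin n → Submodule ℝ (EuclideanSpace ℝ (Fin ℓ))) (S : Fin w → Finset (Fin n)) : Prop :=
  (∀ j, (S j).card = 2 ∨ (S j).card = 3) ∧
  (∀ j, ∀ i₁ ∈ S j, ∀ i₂ ∈ S j, ∀ i₃ ∈ S j, i₁ ≠ i₂ → i₁ ≠ i₃ → i₂ ≠ i₃ →
      V i₁ ≤ V i₂ ⊔ V i₃) ∧
  (∀ j, (S j).card = 2 → ∀ i₁ ∈ S j, ∀ i₂ ∈ S j, V i₁ = V i₂) ∧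
  (∀ i : Fin n, δ * n ≤ ((Finset.univ.filter fun j => i ∈ S j).card : ℝ)) ∧
  (∀ i₁ i₂ : Fin n, i₁ ≠ i₂ →
      (Finset.univ.filter fun j => i₁ ∈ S j ∧ i₂ ∈ S j).card ≤ α)

namespace Stmt15Aux

lemma eucl_norm_sq {ι : Type*} [Fintype ι] (f : EuclideanSpace ℝ ι) :
    ‖f‖ ^ 2 = ∑ i, f i ^ 2 := by
  rw [EuclideanSpace.norm_eq, Real.sq_sqrt (by positivity)]
  simp [Real.norm_eq_abs, sq_abs]

lemma sum_apply_euc {ι κ : Type*} [Fintype κ] (s : Finset ι) (f : ι → EuclideanSpace ℝ κ)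
    (a : κ) : (∑ i ∈ s, f i) a = ∑ i ∈ s, f i a := by
  induction s using Finset.cons_induction with
  | empty => rfl
  | cons i s hi ih => rw [Finset.sum_cons, Finset.sum_cons, ← ih]; rfl

/-- If a subspace `W` contains, for every index `i`, a vector `eᵢ - rᵢ`, then the
dimension of `Wᗮ` is at most `∑ ‖rᵢ‖²`. -/
lemma dim_bound {ι : Type*} [Fintype ι] [DecidableEq ι]
    (W : Submodule ℝ (EuclideanSpace ℝ ι)) (r : ι → EuclideanSpace ℝ ι)
    (h : ∀ i, EuclideanSpace.single i (1 : ℝ) - r i ∈ W) :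
    (Module.finrank ℝ ↥Wᗮ : ℝ) ≤ ∑ i, ‖r i‖ ^ 2 := by
  set m := Module.finrank ℝ ↥Wᗮ with hm
  let F := stdOrthonormalBasis ℝ ↥Wᗮ
  let f : Fin m → EuclideanSpace ℝ ι := fun s => (F s : EuclideanSpace ℝ ι)
  have hfON : Orthonormal ℝ f := by
    rw [orthonormal_iff_ite]
    intro s t
    have hF := F.orthonormal
    rw [orthonormal_iff_ite] at hF
    simpa [f, Submodule.coe_inner] using hF s t
  have hval : ∀ (i : ι) (s : Fin m), f s i = ⟪r i, f s⟫ := by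
    intro i s
    have h0 : ⟪EuclideanSpace.single i (1 : ℝ) - r i, f s⟫ = 0 :=
      Submodule.inner_right_of_mem_orthogonal (h i) (F s).2
    rw [inner_sub_left] at h0
    have h1 : ⟪EuclideanSpace.single i (1 : ℝ), f s⟫ = f s i := by
      rw [EuclideanSpace.inner_single_left]; simp
    linarith
  have hnorm1 : ∀ s : Fin m, ‖f s‖ = 1 := fun s => hfON.1 s
  calc (m : ℝ) = ∑ _s : Fin m, (1 : ℝ) := by simp
    _ = ∑ s : Fin m, ‖f s‖ ^ 2 := by
        refine Finset.sum_congr rfl fun s _ => ?_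
        rw [hnorm1 s]; norm_num
    _ = ∑ s : Fin m, ∑ i, f s i ^ 2 := by
        refine Finset.sum_congr rfl fun s _ => ?_
        exact eucl_norm_sq (f s)
    _ = ∑ i, ∑ s : Fin m, f s i ^ 2 := Finset.sum_comm
    _ = ∑ i, ∑ s : Fin m, ‖⟪f s, r i⟫‖ ^ 2 := by
        refine Finset.sum_congr rfl fun i _ => Finset.sum_congr rfl fun s _ => ?_
        rw [hval i s, real_inner_comm]
        simp [Real.norm_eq_abs, sq_abs]
    _ ≤ ∑ i, ‖r i‖ ^ 2 := Finset.sum_le_sum fun i _ => hfON.sum_inner_products_le (r i)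

end Stmt15Aux

set_option maxHeartbeats 1000000 in
theorem stmt_15 (ℓ n w α k : ℕ) (δ τ : ℝ) (hδ : 0 < δ) (hτ : 0 < τ)
    (V : Fin n → Submodule ℝ (EuclideanSpace ℝ (Fin ℓ)))
    (S : Fin w → Finset (Fin n))
    (hbd : ∀ i, Module.finrank ℝ (V i) ≤ k)
    (hS : IsADSystem α δ V S)
    (hsep : ∀ j, ∀ i₁ ∈ S j, ∀ i₂ ∈ S j, i₁ ≠ i₂ → TauSeparated τ (V i₁) (V i₂)) :
    (Module.finrank ℝ ↥(⨆ i, V i) : ℝ) ≤ α * k / (τ * δ) := by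
  classical
  obtain ⟨hScard, hSsup, hS2, hSdeg, hSα⟩ := hS
  rcases Nat.eq_zero_or_pos n with hn0 | hn0
  · subst hn0
    rw [iSup_of_empty]
    have : Module.finrank ℝ (⊥ : Submodule ℝ (EuclideanSpace ℝ (Fin ℓ))) = 0 :=
      finrank_bot ℝ _
    rw [this]
    have hrhs0 : (0:ℝ) ≤ α * k / (τ * δ) :=
      div_nonneg (by positivity) (le_of_lt (mul_pos hτ hδ))
    simpa using hrhs0
  have hn : (0:ℝ) < n := by exact_mod_cast hn0
  set Γ := (i : Fin n) × Fin (Module.finrank ℝ ↥(V i)) with hΓ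
  let B : (i : Fin n) → OrthonormalBasis (Fin (Module.finrank ℝ ↥(V i))) ℝ ↥(V i) :=
    fun i => stdOrthonormalBasis ℝ ↥(V i)
  let bb : Γ → EuclideanSpace ℝ (Fin ℓ) := fun γ => (B γ.1 γ.2 : EuclideanSpace ℝ (Fin ℓ))
  have hbbmem : ∀ γ : Γ, bb γ ∈ V γ.1 := fun γ => (B γ.1 γ.2).2
  have hbbnorm : ∀ γ : Γ, ‖bb γ‖ = 1 := fun γ => (B γ.1).orthonormal.1 γ.2
  have hON : ∀ i : Fin n, Orthonormal ℝ (fun c => bb ⟨i, c⟩) := by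
    intro i
    rw [orthonormal_iff_ite]
    intro c c'
    have h := (B i).orthonormal
    rw [orthonormal_iff_ite] at h
    simpa [bb, Submodule.coe_inner] using h c c'
  have hblocksum : ∀ (i : Fin n) (x : EuclideanSpace ℝ (Fin ℓ)), x ∈ V i →
      ∑ δ' : Γ, (if δ'.1 = i then ⟪bb δ', x⟫ else 0) • bb δ' = x := by
    intro i x hx
    rw [← Finset.univ_sigma_univ, Finset.sum_sigma]
    rw [Finset.sum_eq_single i]
    · have h := congrArg (Subtype.val) ((B i).sum_repr' (⟨x, hx⟩ : V i))
      simpa [bb, Submodule.coe_inner] using h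
    · intro a _ ha
      simp [ha]
    · intro hi; exact absurd (Finset.mem_univ i) hi
  have hbessel : ∀ (i : Fin n) (x : EuclideanSpace ℝ (Fin ℓ)),
      ∑ δ' : Γ, (if δ'.1 = i then ⟪bb δ', x⟫ else 0) ^ 2 ≤ ‖x‖ ^ 2 := by
    intro i x
    rw [← Finset.univ_sigma_univ, Finset.sum_sigma]
    rw [Finset.sum_eq_single i]
    · have h := (hON i).sum_inner_products_le x (s := Finset.univ)
      calc ∑ c, (if i = i then ⟪bb ⟨i, c⟩, x⟫ else 0) ^ 2
          = ∑ c, ‖⟪bb ⟨i, c⟩, x⟫‖ ^ 2 := by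
            refine Finset.sum_congr rfl fun c _ => ?_
            rw [if_pos rfl]
            simp [Real.norm_eq_abs, sq_abs]
        _ ≤ ‖x‖ ^ 2 := h
    · intro a _ ha
      simp [ha]
    · intro hi; exact absurd (Finset.mem_univ i) hi
  have hcontra : ∀ (j : Fin w) (i i' : Fin n), i ∈ S j → i' ∈ S j → i ≠ i' →
      ∀ v : EuclideanSpace ℝ (Fin ℓ), v ∈ V i → v ∈ V i' → ‖v‖ = 1 → False := by
    intro j i i' hi hi' hne v hv hv' hnv
    have h := hsep j i hi i' hi' hne v hv v hv' hnv hnv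
    have h1 : ⟪v, v⟫ = 1 := by
      rw [real_inner_self_eq_norm_sq, hnv]; norm_num
    rw [h1, abs_one] at h
    linarith
  have hcard3 : ∀ (γ : Γ) (j : Fin w), γ.1 ∈ S j → (S j).card = 3 := by
    intro γ j hij
    rcases hScard j with h2 | h3
    · exfalso
      obtain ⟨u, v, huv, hSeq⟩ := Finset.card_eq_two.1 h2
      have hmem : γ.1 = u ∨ γ.1 = v := by rw [hSeq] at hij; simpa using hij
      have hother : ∃ i', i' ∈ S j ∧ γ.1 ≠ i' := by
        rcases hmem with h | h
        · exact ⟨v, by rw [hSeq]; simp, by rw [h]; exact huv⟩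
        · exact ⟨u, by rw [hSeq]; simp, by rw [h]; exact Ne.symm huv⟩
      obtain ⟨i', hi'm, hne⟩ := hother
      have hVeq := hS2 j h2 γ.1 hij i' hi'm
      exact hcontra j γ.1 i' hij hi'm hne (bb γ) (hbbmem γ)
        (by rw [← hVeq]; exact hbbmem γ) (hbbnorm γ)
    · exact h3
  have key : ∀ (γ : Γ) (j : Fin w), ∃ (p q : Fin n) (x y : EuclideanSpace ℝ (Fin ℓ)),
      γ.1 ∈ S j → (p ∈ S j ∧ q ∈ S j ∧ p ≠ q ∧ p ≠ γ.1 ∧ q ≠ γ.1 ∧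
        x ∈ V p ∧ y ∈ V q ∧ x + y = bb γ ∧ ‖x‖ ^ 2 + ‖y‖ ^ 2 ≤ 1 / τ) := by
    intro γ j
    by_cases hij : γ.1 ∈ S j
    swap
    · exact ⟨γ.1, γ.1, 0, 0, fun h => absurd h hij⟩
    have h3 := hcard3 γ j hij
    have herase : ((S j).erase γ.1).card = 2 := by
      rw [Finset.card_erase_of_mem hij, h3]
    obtain ⟨p, q, hpq, hE⟩ := Finset.card_eq_two.1 herase
    have hpE : p ∈ (S j).erase γ.1 := by rw [hE]; simp
    have hqE : q ∈ (S j).erase γ.1 := by rw [hE]; simp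
    have hp : p ∈ S j := Finset.mem_of_mem_erase hpE
    have hq : q ∈ S j := Finset.mem_of_mem_erase hqE
    have hpγ : p ≠ γ.1 := Finset.ne_of_mem_erase hpE
    have hqγ : q ≠ γ.1 := Finset.ne_of_mem_erase hqE
    have hsub : V γ.1 ≤ V p ⊔ V q :=
      hSsup j γ.1 hij p hp q hq (Ne.symm hpγ) (Ne.symm hqγ) hpq
    obtain ⟨x, hx, y, hy, hxy⟩ := Submodule.mem_sup.1 (hsub (hbbmem γ))
    refine ⟨p, q, x, y, fun _ => ⟨hp, hq, hpq, hpγ, hqγ, hx, hy, hxy, ?_⟩⟩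
    by_cases hx0 : x = 0
    · exfalso
      refine hcontra j γ.1 q hij hq (Ne.symm hqγ) (bb γ) (hbbmem γ) ?_ (hbbnorm γ)
      rw [← hxy, hx0, zero_add]; exact hy
    by_cases hy0 : y = 0
    · exfalso
      refine hcontra j γ.1 p hij hp (Ne.symm hpγ) (bb γ) (hbbmem γ) ?_ (hbbnorm γ)
      rw [← hxy, hy0, add_zero]; exact hx
    have hxn : (0:ℝ) < ‖x‖ := norm_pos_iff.2 hx0
    have hyn : (0:ℝ) < ‖y‖ := norm_pos_iff.2 hy0
    have hsepxy := hsep j p hp q hq hpq (‖x‖⁻¹ • x) (Submodule.smul_mem _ _ hx)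
      (‖y‖⁻¹ • y) (Submodule.smul_mem _ _ hy) (norm_smul_inv_norm hx0) (norm_smul_inv_norm hy0)
    rw [real_inner_smul_left, real_inner_smul_right, abs_mul, abs_mul, abs_inv, abs_inv,
      abs_norm, abs_norm] at hsepxy
    have htau1 : (0:ℝ) ≤ 1 - τ := le_trans (by positivity) hsepxy
    have habs : |⟪x, y⟫| ≤ (1 - τ) * (‖x‖ * ‖y‖) := by
      have hmm := mul_le_mul_of_nonneg_left hsepxy (le_of_lt (mul_pos hxn hyn))
      calc |⟪x, y⟫| = ‖x‖ * ‖y‖ * (‖x‖⁻¹ * (‖y‖⁻¹ * |⟪x, y⟫|)) := by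
            field_simp
          _ ≤ ‖x‖ * ‖y‖ * (1 - τ) := hmm
          _ = (1 - τ) * (‖x‖ * ‖y‖) := by ring
    have hbs : ‖x + y‖ ^ 2 = 1 := by rw [hxy, hbbnorm]; norm_num
    rw [norm_add_sq_real] at hbs
    rw [le_div_iff₀ hτ]
    have h2ab : 2 * (‖x‖ * ‖y‖) ≤ ‖x‖ ^ 2 + ‖y‖ ^ 2 := by nlinarith [sq_nonneg (‖x‖ - ‖y‖)]
    have habs' := abs_le.1 habs
    nlinarith [mul_le_mul_of_nonneg_left h2ab htau1]
  choose pp qq xx yy hkey using key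
  let J : Fin n → Finset (Fin w) := fun i => Finset.univ.filter fun j => i ∈ S j
  have hmemJ : ∀ {i : Fin n} {j : Fin w}, j ∈ J i ↔ i ∈ S j := by
    intro i j; simp [J]
  have hdeg : ∀ i, δ * n ≤ ((J i).card : ℝ) := fun i => hSdeg i
  have hδn : (0:ℝ) < δ * n := mul_pos hδ hn
  have hdegpos : ∀ i, (0:ℝ) < ((J i).card : ℝ) := fun i => lt_of_lt_of_le hδn (hdeg i)
  let zz : Γ → Fin w → EuclideanSpace ℝ Γ := fun γ j => WithLp.toLp 2 fun δ' =>
    (if δ'.1 = pp γ j then ⟪bb δ', xx γ j⟫ else 0) +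
      (if δ'.1 = qq γ j then ⟪bb δ', yy γ j⟫ else 0)
  let rr : Γ → EuclideanSpace ℝ Γ := fun γ => (((J γ.1).card : ℝ))⁻¹ • ∑ j ∈ J γ.1, zz γ j
  let Φ : EuclideanSpace ℝ Γ →ₗ[ℝ] EuclideanSpace ℝ (Fin ℓ) :=
    { toFun := fun f => ∑ δ' : Γ, f δ' • bb δ'
      map_add' := fun f g => by
        simp only [PiLp.add_apply, add_smul, Finset.sum_add_distrib]
      map_smul' := fun c f => by
        simp only [PiLp.smul_apply, smul_eq_mul, RingHom.id_apply, Finset.smul_sum, smul_smul] }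
  have hΦ : ∀ f, Φ f = ∑ δ' : Γ, f δ' • bb δ' := fun f => rfl
  have hzz : ∀ (γ : Γ) (j : Fin w) (δ' : Γ), zz γ j δ' =
      (if δ'.1 = pp γ j then ⟪bb δ', xx γ j⟫ else 0) +
        (if δ'.1 = qq γ j then ⟪bb δ', yy γ j⟫ else 0) := fun _ _ _ => rfl
  have hrrdef : ∀ γ : Γ, rr γ = (((J γ.1).card : ℝ))⁻¹ • ∑ j ∈ J γ.1, zz γ j :=
    fun _ => rfl
  clear_value zz rr Φ
  have hΦz : ∀ (γ : Γ) (j : Fin w), j ∈ J γ.1 → Φ (zz γ j) = bb γ := by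
    intro γ j hj
    obtain ⟨hp, hq, hpq, hpγ, hqγ, hxV, hyV, hxy, hb⟩ := hkey γ j (hmemJ.1 hj)
    rw [hΦ]
    have hsplit : ∀ δ' : Γ, zz γ j δ' • bb δ' =
        (if δ'.1 = pp γ j then ⟪bb δ', xx γ j⟫ else 0) • bb δ' +
          (if δ'.1 = qq γ j then ⟪bb δ', yy γ j⟫ else 0) • bb δ' := by
      intro δ'; rw [hzz, add_smul]
    rw [Finset.sum_congr rfl fun δ' _ => hsplit δ', Finset.sum_add_distrib,
      hblocksum _ _ hxV, hblocksum _ _ hyV, hxy]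
  have hznorm : ∀ (γ : Γ) (j : Fin w), j ∈ J γ.1 → ∑ δ' : Γ, zz γ j δ' ^ 2 ≤ 1 / τ := by
    intro γ j hj
    obtain ⟨hp, hq, hpq, hpγ, hqγ, hxV, hyV, hxy, hb⟩ := hkey γ j (hmemJ.1 hj)
    have hsplit : ∀ δ' : Γ, zz γ j δ' ^ 2 =
        (if δ'.1 = pp γ j then ⟪bb δ', xx γ j⟫ else 0) ^ 2 +
          (if δ'.1 = qq γ j then ⟪bb δ', yy γ j⟫ else 0) ^ 2 := by
      intro δ'
      rw [hzz]
      by_cases h1 : δ'.1 = pp γ j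
      · have h2 : ¬δ'.1 = qq γ j := fun h2 => hpq (h1.symm.trans h2)
        rw [if_pos h1, if_neg h2]; ring
      · by_cases h2 : δ'.1 = qq γ j
        · rw [if_neg h1, if_pos h2]; ring
        · rw [if_neg h1, if_neg h2]; ring
    calc ∑ δ' : Γ, zz γ j δ' ^ 2
        = ∑ δ' : Γ, ((if δ'.1 = pp γ j then ⟪bb δ', xx γ j⟫ else 0) ^ 2 +
            (if δ'.1 = qq γ j then ⟪bb δ', yy γ j⟫ else 0) ^ 2) :=
          Finset.sum_congr rfl fun δ' _ => hsplit δ'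
      _ = (∑ δ' : Γ, (if δ'.1 = pp γ j then ⟪bb δ', xx γ j⟫ else 0) ^ 2)
            + ∑ δ' : Γ, (if δ'.1 = qq γ j then ⟪bb δ', yy γ j⟫ else 0) ^ 2 :=
          Finset.sum_add_distrib
      _ ≤ ‖xx γ j‖ ^ 2 + ‖yy γ j‖ ^ 2 := add_le_add (hbessel _ _) (hbessel _ _)
      _ ≤ 1 / τ := hb
  have hbig : ∀ γ : Γ, ∀ δ' : Γ,
      (∑ j ∈ J γ.1, zz γ j δ') ^ 2 ≤ (α : ℝ) * ∑ j ∈ J γ.1, zz γ j δ' ^ 2 := by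
    intro γ δ'
    by_cases hδγ : δ'.1 = γ.1
    · have hz0 : ∀ j ∈ J γ.1, zz γ j δ' = 0 := by
        intro j hj
        obtain ⟨hp, hq, hpq, hpγ, hqγ, _, _, _, _⟩ := hkey γ j (hmemJ.1 hj)
        rw [hzz, if_neg fun h => hpγ (h.symm.trans hδγ),
          if_neg fun h => hqγ (h.symm.trans hδγ), add_zero]
      rw [Finset.sum_eq_zero hz0]
      have h00 : (0:ℝ) ≤ (α : ℝ) * ∑ j ∈ J γ.1, zz γ j δ' ^ 2 :=
        mul_nonneg (Nat.cast_nonneg α) (Finset.sum_nonneg fun j _ => sq_nonneg _)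
      simpa using h00
    · set Tδ := (J γ.1).filter (fun j => δ'.1 ∈ S j) with hTδ
      have hsubset : Tδ ⊆ J γ.1 := Finset.filter_subset _ _
      have hzero : ∀ j ∈ J γ.1, j ∉ Tδ → zz γ j δ' = 0 := by
        intro j hj hnT
        obtain ⟨hp, hq, hpq, hpγ, hqγ, _, _, _, _⟩ := hkey γ j (hmemJ.1 hj)
        have hδS : δ'.1 ∉ S j := fun hδS => hnT (Finset.mem_filter.2 ⟨hj, hδS⟩)
        rw [hzz, if_neg fun h => hδS (by rw [h]; exact hp),
          if_neg fun h => hδS (by rw [h]; exact hq), add_zero]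
      have hTcard : (Tδ.card : ℝ) ≤ (α : ℝ) := by
        have hsub2 : Tδ ⊆ Finset.univ.filter fun j => γ.1 ∈ S j ∧ δ'.1 ∈ S j := by
          intro j hjT
          obtain ⟨hjJ, hjS⟩ := Finset.mem_filter.1 hjT
          exact Finset.mem_filter.2 ⟨Finset.mem_univ j, hmemJ.1 hjJ, hjS⟩
        have hcc := le_trans (Finset.card_le_card hsub2) (hSα γ.1 δ'.1 (Ne.symm hδγ))
        exact_mod_cast hcc
      calc (∑ j ∈ J γ.1, zz γ j δ') ^ 2 = (∑ j ∈ Tδ, zz γ j δ') ^ 2 := by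
            rw [← Finset.sum_subset hsubset hzero]
        _ ≤ Tδ.card * ∑ j ∈ Tδ, zz γ j δ' ^ 2 := sq_sum_le_card_mul_sum_sq
        _ ≤ (α : ℝ) * ∑ j ∈ Tδ, zz γ j δ' ^ 2 :=
            mul_le_mul_of_nonneg_right hTcard (Finset.sum_nonneg fun j _ => sq_nonneg _)
        _ ≤ (α : ℝ) * ∑ j ∈ J γ.1, zz γ j δ' ^ 2 := by
            refine mul_le_mul_of_nonneg_left ?_ (Nat.cast_nonneg α)
            exact Finset.sum_le_sum_of_subset_of_nonneg hsubset fun j _ _ => sq_nonneg _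
  have hτδn : (0:ℝ) < τ * (δ * n) := mul_pos hτ hδn
  have hrr : ∀ γ : Γ, ‖rr γ‖ ^ 2 ≤ (α : ℝ) / (τ * (δ * n)) := by
    intro γ
    have hD := hdegpos γ.1
    have hDδ := hdeg γ.1
    have h1 : ‖rr γ‖ ^ 2 = (((J γ.1).card : ℝ)⁻¹) ^ 2 * ‖∑ j ∈ J γ.1, zz γ j‖ ^ 2 := by
      rw [hrrdef, norm_smul, mul_pow, Real.norm_eq_abs, sq_abs]
    have h2 : ‖∑ j ∈ J γ.1, zz γ j‖ ^ 2 ≤ (α : ℝ) * ((J γ.1).card : ℝ) * (1 / τ) := by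
      rw [Stmt15Aux.eucl_norm_sq]
      calc ∑ δ' : Γ, (∑ j ∈ J γ.1, zz γ j) δ' ^ 2
          = ∑ δ' : Γ, (∑ j ∈ J γ.1, zz γ j δ') ^ 2 := by
            refine Finset.sum_congr rfl fun δ' _ => ?_
            rw [Stmt15Aux.sum_apply_euc]
        _ ≤ ∑ δ' : Γ, (α : ℝ) * ∑ j ∈ J γ.1, zz γ j δ' ^ 2 :=
            Finset.sum_le_sum fun δ' _ => hbig γ δ'
        _ = (α : ℝ) * ∑ j ∈ J γ.1, ∑ δ' : Γ, zz γ j δ' ^ 2 := by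
            rw [← Finset.mul_sum, Finset.sum_comm]
        _ ≤ (α : ℝ) * ∑ _j ∈ J γ.1, 1 / τ := by
            refine mul_le_mul_of_nonneg_left (Finset.sum_le_sum fun j hj => hznorm γ j hj)
              (Nat.cast_nonneg α)
        _ = (α : ℝ) * ((J γ.1).card : ℝ) * (1 / τ) := by
            rw [Finset.sum_const, nsmul_eq_mul]; ring
    calc ‖rr γ‖ ^ 2 = (((J γ.1).card : ℝ)⁻¹) ^ 2 * ‖∑ j ∈ J γ.1, zz γ j‖ ^ 2 := h1
      _ ≤ (((J γ.1).card : ℝ)⁻¹) ^ 2 * ((α : ℝ) * ((J γ.1).card : ℝ) * (1 / τ)) :=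
          mul_le_mul_of_nonneg_left h2 (sq_nonneg _)
      _ = (α : ℝ) / (τ * ((J γ.1).card : ℝ)) := by
          field_simp
      _ ≤ (α : ℝ) / (τ * (δ * n)) := by
          rw [div_le_div_iff₀ (mul_pos hτ hD) hτδn]
          have hmul : τ * (δ * n) ≤ τ * ((J γ.1).card : ℝ) :=
            mul_le_mul_of_nonneg_left hDδ (le_of_lt hτ)
          have hα0 : (0:ℝ) ≤ (α : ℝ) := Nat.cast_nonneg α
          nlinarith
  have hker : ∀ γ : Γ, EuclideanSpace.single γ (1 : ℝ) - rr γ ∈ LinearMap.ker Φ := by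
    intro γ
    rw [LinearMap.mem_ker, map_sub]
    have h1 : Φ (EuclideanSpace.single γ (1 : ℝ)) = bb γ := by
      rw [hΦ]
      rw [Finset.sum_eq_single γ]
      · simp [EuclideanSpace.single_apply]
      · intro δ' _ hδ'
        simp [EuclideanSpace.single_apply, hδ']
      · intro h; exact absurd (Finset.mem_univ γ) h
    have h2 : Φ (rr γ) = bb γ := by
      rw [hrrdef, map_smul, map_sum]
      rw [Finset.sum_congr rfl fun j hj => hΦz γ j hj, Finset.sum_const]
      rw [← Nat.cast_smul_eq_nsmul ℝ, smul_smul,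
        inv_mul_cancel₀ (ne_of_gt (hdegpos γ.1)), one_smul]
    rw [h1, h2, sub_self]
  have hrange : LinearMap.range Φ = ⨆ i, V i := by
    apply le_antisymm
    · rintro v ⟨f, rfl⟩
      rw [hΦ]
      exact Submodule.sum_mem _ fun δ' _ =>
        Submodule.smul_mem _ _ (Submodule.mem_iSup_of_mem δ'.1 (hbbmem δ'))
    · refine iSup_le fun i x hx => ?_
      refine ⟨WithLp.toLp 2 fun δ' => if δ'.1 = i then ⟪bb δ', x⟫ else 0, ?_⟩
      rw [hΦ]
      exact hblocksum i x hx
  have hΓcard : Fintype.card Γ ≤ n * k := by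
    calc Fintype.card Γ
        = ∑ i : Fin n, Fintype.card (Fin (Module.finrank ℝ ↥(V i))) := Fintype.card_sigma
      _ = ∑ i : Fin n, Module.finrank ℝ ↥(V i) := by simp
      _ ≤ ∑ _i : Fin n, k := Finset.sum_le_sum fun i _ => hbd i
      _ = n * k := by
          rw [Finset.sum_const, smul_eq_mul, Finset.card_univ, Fintype.card_fin]
  have hfr : Module.finrank ℝ ↥(⨆ i, V i) = Module.finrank ℝ ↥(LinearMap.ker Φ)ᗮ := by
    have h1 := LinearMap.finrank_range_add_finrank_ker Φ
    have h2 := Submodule.finrank_add_finrank_orthogonal (K := LinearMap.ker Φ)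
    rw [hrange] at h1
    omega
  rw [hfr]
  have hτδ : (0:ℝ) < τ * δ := mul_pos hτ hδ
  have hn' : (n:ℝ) ≠ 0 := ne_of_gt hn
  calc ((Module.finrank ℝ ↥(LinearMap.ker Φ)ᗮ : ℕ) : ℝ)
      ≤ ∑ γ : Γ, ‖rr γ‖ ^ 2 := Stmt15Aux.dim_bound _ _ hker
    _ ≤ ∑ _γ : Γ, (α : ℝ) / (τ * (δ * n)) := Finset.sum_le_sum fun γ _ => hrr γ
    _ = (Fintype.card Γ : ℝ) * ((α : ℝ) / (τ * (δ * n))) := by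
        rw [Finset.sum_const, nsmul_eq_mul, Finset.card_univ]
    _ ≤ ((n * k : ℕ) : ℝ) * ((α : ℝ) / (τ * (δ * n))) := by
        refine mul_le_mul_of_nonneg_right ?_
          (div_nonneg (by positivity) (le_of_lt hτδn))
        exact_mod_cast hΓcard
    _ = α * k / (τ * δ) := by
        push_cast
        field_simp
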